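/- For all real a, b ≥ 1 and every integer k ≤ 1, ∫_{√(b/a)}^∞ e^{-ay - b/y} y^{k-1} dy ≤ a^{-k} (ab)^{(k-1)/2} e^{-√(ab)}. -/

import Mathlib

set_option autoImplicit false

open MeasureTheory Real

/-- For `a, b ≥ 1` and integers `k ≤ 1`,
`∫_{√(b/a)}^∞ e^{-ay - b/y} y^{k-1} dy ≤ a^{-k} (ab)^{(k-1)/2} e^{-√(ab)}`. -/
theorem bessel_type_tail_bound (k : ℤ) (hk : k ≤ 1) (a b : ℝ) (ha : 1 ≤ a) (hb : 1 ≤ b) :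
    ∫ y in Set.Ioi (Real.sqrt (b / a)), Real.exp (-a * y - b / y) * y ^ (k - 1) ≤
      a ^ (-k) * (a * b) ^ (((k : ℝ) - 1) / 2) * Real.exp (-Real.sqrt (a * b)) := by
  have ha0 : (0:ℝ) < a := lt_of_lt_of_le one_pos ha
  have hb0 : (0:ℝ) < b := lt_of_lt_of_le one_pos hb
  set s := Real.sqrt (b / a) with hs
  have hba : (0:ℝ) < b / a := div_pos hb0 ha0
  have hs0 : 0 < s := Real.sqrt_pos.mpr hba
  set e : ℝ := ((k : ℝ) - 1) / 2 with he
  set C : ℝ := (b / a) ^ e with hC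
  have hC0 : 0 ≤ C := Real.rpow_nonneg hba.le _
  -- s ^ (k-1) = C
  have hsC : s ^ (k - 1) = C := by
    rw [hC, hs, Real.sqrt_eq_rpow, ← Real.rpow_intCast ((b/a) ^ (1/2:ℝ)) (k-1),
      ← Real.rpow_mul hba.le]
    congr 1
    push_cast
    ring
  -- pointwise bound
  have hbound : ∀ y ∈ Set.Ioi s, Real.exp (-a * y - b / y) * y ^ (k - 1)
      ≤ C * Real.exp (-a * y) := by
    intro y hy
    have hy0 : 0 < y := hs0.trans hy
    have h1 : Real.exp (-a * y - b / y) ≤ Real.exp (-a * y) := by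
      apply Real.exp_le_exp.mpr
      have : 0 ≤ b / y := le_of_lt (div_pos hb0 hy0)
      linarith
    have h2 : y ^ (k - 1) ≤ C := by
      rw [← hsC, ← Real.rpow_intCast y (k-1), ← Real.rpow_intCast s (k-1)]
      apply Real.rpow_le_rpow_of_nonpos hs0 (le_of_lt hy)
      have : ((k - 1 : ℤ) : ℝ) = (k : ℝ) - 1 := by push_cast; ring
      rw [this]
      have : (k:ℝ) ≤ 1 := by exact_mod_cast hk
      linarith
    have h3 : 0 ≤ y ^ (k - 1) := zpow_nonneg hy0.le _
    calc Real.exp (-a * y - b / y) * y ^ (k - 1)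
        ≤ Real.exp (-a * y) * C := mul_le_mul h1 h2 h3 (Real.exp_pos _).le
      _ = C * Real.exp (-a * y) := mul_comm _ _
  -- integrability of the dominating function
  have hg : IntegrableOn (fun y => C * Real.exp (-a * y)) (Set.Ioi s) :=
    (exp_neg_integrableOn_Ioi s ha0).const_mul C
  -- integrability of the integrand
  have hcont : ContinuousOn (fun y : ℝ => Real.exp (-a * y - b / y) * y ^ (k - 1))
      (Set.Ioi s) := by
    apply ContinuousOn.mul
    · exact Real.continuous_exp.comp_continuousOn
        (((continuous_const.mul continuous_id).continuousOn).sub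
          (continuousOn_const.div continuousOn_id
            (fun y hy => ne_of_gt (hs0.trans hy))))
    · exact continuousOn_id.zpow₀ _ (fun y hy => Or.inl (ne_of_gt (hs0.trans hy)))
  have hf : IntegrableOn (fun y => Real.exp (-a * y - b / y) * y ^ (k - 1))
      (Set.Ioi s) := by
    apply Integrable.mono' hg (hcont.aestronglyMeasurable measurableSet_Ioi)
    filter_upwards [ae_restrict_mem measurableSet_Ioi] with y hy
    rw [Real.norm_eq_abs, abs_of_nonneg (mul_nonneg (Real.exp_pos _).le
      (zpow_nonneg (hs0.trans hy).le _))]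
    exact hbound y hy
  -- the integral of the dominating function
  have hint : ∫ y in Set.Ioi s, Real.exp (-a * y) = a⁻¹ * Real.exp (-(a * s)) := by
    have := integral_comp_mul_left_Ioi (fun x => Real.exp (-x)) s ha0
    simp only [smul_eq_mul, neg_mul] at this ⊢
    rw [this, integral_exp_neg_Ioi]
  -- a * s = sqrt (a * b)
  have has : a * s = Real.sqrt (a * b) := by
    rw [hs, ← Real.sqrt_sq ha0.le, ← Real.sqrt_mul (sq_nonneg a)]
    congr 1
    field_simp
    rw [Real.sq_sqrt (sq_nonneg a)]
  -- constant identity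
  have hconst : C * a⁻¹ = a ^ (-k) * (a * b) ^ e := by
    rw [hC, ← Real.rpow_intCast a (-k), Real.div_rpow hb0.le ha0.le,
      Real.mul_rpow ha0.le hb0.le, ← Real.rpow_neg_one a,
      div_eq_mul_inv, ← Real.rpow_neg ha0.le]
    rw [mul_assoc, ← Real.rpow_add ha0, show ((-k : ℤ) : ℝ) = -(k:ℝ) by push_cast; ring]
    rw [mul_comm ((a:ℝ) ^ (-(k:ℝ))) _, mul_right_comm, ← Real.rpow_add ha0]
    ring_nf
    congr 2; rw [he]; ring
  calc ∫ y in Set.Ioi s, Real.exp (-a * y - b / y) * y ^ (k - 1)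
      ≤ ∫ y in Set.Ioi s, C * Real.exp (-a * y) :=
        setIntegral_mono_on hf hg measurableSet_Ioi hbound
    _ = C * (a⁻¹ * Real.exp (-(a * s))) := by rw [integral_const_mul, hint]
    _ = a ^ (-k) * (a * b) ^ e * Real.exp (-Real.sqrt (a * b)) := by
        rw [← has, ← hconst]; ring
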